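/- arXiv:1811.00866 — 2 statements merged into one kernel-verified Lean document; each statement's English description precedes it below -/
import Mathlib

section
/- Let l < u ≤ 0 and d ∈ [l, u]. Then for every y ∈ [l, u]: (i) tanh(y) ≤ tanh(l) + ((tanh(u) − tanh(l))/(u − l))(y − l) (the chord through the endpoints is an upper bound), and (ii) tanh(y) ≥ tanh(d) + (1 − tanh(d)²)(y − d) (the tangent line at d is a lower bound). -/
open Real Set

lemma tanh_hasDerivAt' (x : ℝ) : HasDerivAt Real.tanh (1 - Real.tanh x ^ 2) x := by
  have hc : Real.cosh x ≠ 0 := (Real.cosh_pos x).ne'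
  have h : HasDerivAt (fun y => Real.sinh y / Real.cosh y)
      ((Real.cosh x * Real.cosh x - Real.sinh x * Real.sinh x) / Real.cosh x ^ 2) x :=
    (Real.hasDerivAt_sinh x).div (Real.hasDerivAt_cosh x) hc
  have heq : (fun y => Real.sinh y / Real.cosh y) = Real.tanh := by
    funext y; rw [Real.tanh_eq_sinh_div_cosh]
  rw [heq] at h
  convert h using 1
  rw [Real.tanh_eq_sinh_div_cosh]
  field_simp

lemma tanh_nonpos_of_nonpos {x : ℝ} (hx : x ≤ 0) : Real.tanh x ≤ 0 := by
  rw [Real.tanh_eq_sinh_div_cosh]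
  exact div_nonpos_of_nonpos_of_nonneg (Real.sinh_nonpos_iff.2 hx) (Real.cosh_pos x).le

lemma tanh_sq_le_one (x : ℝ) : Real.tanh x ^ 2 ≤ 1 := by
  rw [Real.tanh_eq_sinh_div_cosh, div_pow, div_le_one (by positivity)]
  rw [Real.cosh_sq]; linarith

lemma tanh_deriv_eq : deriv Real.tanh = fun x => 1 - Real.tanh x ^ 2 := by
  funext x; exact (tanh_hasDerivAt' x).deriv

lemma tanh_convexOn_Iic : ConvexOn ℝ (Set.Iic (0 : ℝ)) Real.tanh := by
  have hdiff : ∀ x : ℝ, DifferentiableAt ℝ Real.tanh x :=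
    fun x => (tanh_hasDerivAt' x).differentiableAt
  apply convexOn_of_deriv2_nonneg (convex_Iic 0)
  · exact fun x _ => (hdiff x).continuousAt.continuousWithinAt
  · exact fun x _ => (hdiff x).differentiableWithinAt
  · intro x _
    rw [tanh_deriv_eq]
    exact (((hdiff x).pow 2).const_sub 1).differentiableWithinAt
  · intro x hx
    rw [interior_Iic, mem_Iio] at hx
    have h2 : HasDerivAt (fun y => 1 - Real.tanh y ^ 2)
        (-(2 * Real.tanh x ^ 1 * (1 - Real.tanh x ^ 2))) x := by
      exact (((tanh_hasDerivAt' x).pow 2).const_sub 1)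
    have : deriv^[2] Real.tanh x = -(2 * Real.tanh x ^ 1 * (1 - Real.tanh x ^ 2)) := by
      show deriv (deriv Real.tanh) x = _
      rw [tanh_deriv_eq]
      exact h2.deriv
    rw [this]
    have h1 : Real.tanh x ≤ 0 := tanh_nonpos_of_nonpos hx.le
    have h3 : Real.tanh x ^ 2 ≤ 1 := tanh_sq_le_one x
    nlinarith

/-- CROWN linear bounds for a tanh neuron whose pre-activation interval `[l, u]` lies in
`(-∞, 0]`: the chord through the endpoints is an upper bound and the tangent line at any
`d ∈ [l, u]` is a lower bound. -/
theorem tanh_crown_bounds_nonpos (l u d : ℝ) (hu : u ≤ 0) (hlu : l < u)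
    (hd : d ∈ Set.Icc l u) :
    ∀ y ∈ Set.Icc l u,
      Real.tanh y ≤ Real.tanh l + ((Real.tanh u - Real.tanh l) / (u - l)) * (y - l) ∧
      Real.tanh d + (1 - Real.tanh d ^ 2) * (y - d) ≤ Real.tanh y := by
  have hsub : Set.Icc l u ⊆ Set.Iic (0 : ℝ) := fun x hx => le_trans hx.2 hu
  have hfc : ConvexOn ℝ (Set.Icc l u) Real.tanh :=
    tanh_convexOn_Iic.subset hsub (convex_Icc l u)
  have hl : l ∈ Set.Icc l u := ⟨le_refl l, hlu.le⟩
  have hu' : u ∈ Set.Icc l u := ⟨hlu.le, le_refl u⟩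
  intro y hy
  constructor
  · -- chord upper bound
    rcases eq_or_lt_of_le hy.1 with h | h
    · simp [← h]
    rcases eq_or_lt_of_le hy.2 with h2 | h2
    · rw [h2]
      have hne : u - l ≠ 0 := by linarith
      field_simp
      linarith
    · -- l < y < u : slope f l y ≤ slope f l u
      have hmono := hfc.slope_mono hl
      have hs := hmono (Set.mem_diff_singleton.2 ⟨hy, h.ne'⟩)
        (Set.mem_diff_singleton.2 ⟨hu', hlu.ne'⟩) h2.le
      rw [slope_def_field, slope_def_field] at hs
      have hyl : 0 < y - l := by linarith
      have := (div_le_div_iff₀ hyl (by linarith : (0:ℝ) < u - l)).1 hs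
      rw [div_mul_eq_mul_div, ← sub_le_iff_le_add', le_div_iff₀ (by linarith : (0:ℝ) < u - l)]
      linarith
  · -- tangent lower bound
    rcases lt_trichotomy y d with h | h | h
    · have hs := hfc.slope_le_of_hasDerivAt hy hd h (tanh_hasDerivAt' d)
      rw [slope_def_field] at hs
      have := (div_le_iff₀ (by linarith : (0:ℝ) < d - y)).1 hs
      nlinarith
    · simp [h]
    · have hs := hfc.le_slope_of_hasDerivAt hd hy h (tanh_hasDerivAt' d)
      rw [slope_def_field] at hs
      have := (le_div_iff₀ (by linarith : (0:ℝ) < y - d)).1 hs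
      nlinarith
end

section
/- Let σ(y) = 1/(1 + e^{−y}). For every l < 0 there exists d ≥ 0 such that σ(d) − σ(l) = σ(d)(1 − σ(d))(d − l); that is, the tangent line to σ at the point d on the concave branch passes through the point (l, σ(l)). -/
/-- The sigmoid (logistic) function `σ(y) = 1 / (1 + exp (-y))`. -/
noncomputable def sigmoid (y : ℝ) : ℝ := 1 / (1 + Real.exp (-y))

lemma one_add_exp_pos (y : ℝ) : 0 < 1 + Real.exp (-y) := by positivity

lemma hasDerivAt_sigmoid (y : ℝ) :
    HasDerivAt sigmoid (sigmoid y * (1 - sigmoid y)) y := by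
  have h : HasDerivAt (fun z : ℝ => 1 + Real.exp (-z)) (-Real.exp (-y)) y := by
    have := (Real.hasDerivAt_exp (-y)).comp y ((hasDerivAt_id y).neg)
    simpa using this.const_add 1
  have h2 := h.inv (ne_of_gt (one_add_exp_pos y))
  have hfun : (fun z : ℝ => 1 + Real.exp (-z))⁻¹ = sigmoid := by
    funext z; simp [sigmoid, one_div]
  rw [hfun] at h2
  refine h2.congr_deriv ?_
  have hd : (1 + Real.exp (-y)) ≠ 0 := ne_of_gt (one_add_exp_pos y)
  unfold sigmoid
  field_simp
  ring

lemma continuous_sigmoid' : Continuous sigmoid :=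
  continuous_iff_continuousAt.2 fun y => (hasDerivAt_sigmoid y).continuousAt

lemma sigmoid_pos (y : ℝ) : 0 < sigmoid y := by
  unfold sigmoid; positivity

lemma sigmoid_lt_one (y : ℝ) : sigmoid y < 1 := by
  unfold sigmoid
  rw [div_lt_one (one_add_exp_pos y)]
  linarith [Real.exp_pos (-y)]

lemma sigmoid_deriv_le (y : ℝ) : sigmoid y * (1 - sigmoid y) ≤ 1 / 4 := by
  nlinarith [sq_nonneg (sigmoid y - 1 / 2)]

/-- For every `l < 0` there is a point `d ≥ 0` at which the tangent line of the sigmoid passes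
through `(l, σ l)`, i.e. `σ d - σ l = σ d * (1 - σ d) * (d - l)`. -/
theorem sigmoid_tangent_point_exists (l : ℝ) (hl : l < 0) :
    ∃ d : ℝ, 0 ≤ d ∧ sigmoid d - sigmoid l = sigmoid d * (1 - sigmoid d) * (d - l) := by
  set f : ℝ → ℝ := fun d => sigmoid d - sigmoid l - sigmoid d * (1 - sigmoid d) * (d - l) with hf
  have hfc : Continuous f := by
    apply Continuous.sub
    · exact continuous_sigmoid'.sub continuous_const
    · exact ((continuous_sigmoid'.mul (continuous_const.sub continuous_sigmoid')).mul
        (continuous_id.sub continuous_const))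
  have hsig0 : sigmoid 0 = 1 / 2 := by
    unfold sigmoid; norm_num
  -- f 0 ≤ 0 via MVT
  have hf0 : f 0 ≤ 0 := by
    obtain ⟨c, _, hc⟩ := exists_hasDerivAt_eq_slope sigmoid
      (fun y => sigmoid y * (1 - sigmoid y)) hl
      continuous_sigmoid'.continuousOn (fun x _ => hasDerivAt_sigmoid x)
    have hslope : sigmoid 0 - sigmoid l = (sigmoid c * (1 - sigmoid c)) * (0 - l) := by
      rw [hc]
      field_simp
      rw [mul_div_cancel_right₀ _ (by linarith : (0:ℝ) - l ≠ 0)]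
    have hcle := sigmoid_deriv_le c
    simp only [hf, hsig0] at *
    nlinarith
  -- f D > 0 for D = 16 * (1 - l)
  set D : ℝ := 16 * (1 - l) with hD
  have hD16 : (16 : ℝ) ≤ D := by nlinarith
  have hDpos : 0 < D := by linarith
  have ht : Real.exp (-D) ≤ 27 / D ^ 3 := by
    have h1 : D / 3 ≤ Real.exp (D / 3) := by
      linarith [Real.add_one_le_exp (D / 3)]
    have h2 : D ^ 3 / 27 ≤ Real.exp D := by
      have : (D / 3) ^ 3 ≤ Real.exp (D / 3) ^ 3 := by
        apply pow_le_pow_left₀ (by positivity) h1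
      calc D ^ 3 / 27 = (D / 3) ^ 3 := by ring
        _ ≤ Real.exp (D / 3) ^ 3 := this
        _ = Real.exp D := by
            rw [← Real.exp_nat_mul]
            congr 1
            push_cast
            ring
    rw [Real.exp_neg]
    rw [inv_le_comm₀ (Real.exp_pos D) (by positivity)] at *
    · rw [inv_div]
      linarith
  have hsigD : 1 - Real.exp (-D) ≤ sigmoid D := by
    unfold sigmoid
    rw [le_div_iff₀ (one_add_exp_pos D)]
    nlinarith [Real.exp_pos (-D), sq_nonneg (Real.exp (-D))]
  have hderivD : sigmoid D * (1 - sigmoid D) ≤ Real.exp (-D) := by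
    have h1 : 1 - sigmoid D ≤ Real.exp (-D) := by linarith
    nlinarith [sigmoid_pos D, sigmoid_lt_one D, Real.exp_pos (-D)]
  have hsigl : sigmoid l < 1 / 2 := by
    unfold sigmoid
    rw [div_lt_iff₀ (one_add_exp_pos l)]
    have : 1 < Real.exp (-l) := by
      have := Real.add_one_le_exp (-l)
      linarith
    linarith
  have hfD : 0 < f D := by
    have hbound : Real.exp (-D) * (1 + (D - l)) ≤ 81 / D ^ 2 := by
      have hDl : 1 + (D - l) ≤ 3 * D := by nlinarith
      have he : 0 < Real.exp (-D) := Real.exp_pos _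
      calc Real.exp (-D) * (1 + (D - l)) ≤ (27 / D ^ 3) * (3 * D) := by
            exact mul_le_mul ht hDl (by linarith)
              (le_of_lt (div_pos (by norm_num) (pow_pos hDpos 3)))
        _ = 81 / D ^ 2 := by field_simp; ring
      -- done
    have h81 : (81 : ℝ) / D ^ 2 ≤ 81 / 256 := by
      apply div_le_div_of_nonneg_left (by norm_num) (by norm_num) ?_
      nlinarith
    have hDl0 : 0 ≤ D - l := by linarith
    have he : 0 < Real.exp (-D) := Real.exp_pos _
    have : f D ≥ 1 - Real.exp (-D) - sigmoid l - Real.exp (-D) * (D - l) := by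
      simp only [hf]
      have := mul_le_mul_of_nonneg_right hderivD hDl0
      linarith [hsigD]
    nlinarith
  -- IVT
  have hsub := intermediate_value_Icc (le_of_lt hDpos) hfc.continuousOn
  have h0mem : (0 : ℝ) ∈ Set.Icc (f 0) (f D) := ⟨hf0, le_of_lt hfD⟩
  obtain ⟨c, hcmem, hfceq⟩ := hsub h0mem
  refine ⟨c, hcmem.1, ?_⟩
  simp only [hf] at hfceq
  linarith [hfceq]
end
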